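/- arXiv:0810.2260 — 2 statements merged into one kernel-verified Lean document; each statement's English description precedes it below -/
import Mathlib

section
/- Let Ψ : ℂ → ℂ be a nonconstant holomorphic function, λ ∈ ℂ with |λ| > 1, and f : ℂ → ℂ holomorphic, satisfying the linearization equation Ψ(λz) = f(Ψ(z)) for all z, with Ψ(0) = p, f(p) = p, and Ψ'(0) ≠ 0. If for every n ≥ 1 and every critical point c of f one has fⁿ(c) ≠ p, then Ψ'(z) ≠ 0 for every z with Ψ(z) = p. -/
/-- If `p` is not in the forward orbit of any critical point of `f`, then the
Poincaré (linearizing) function `Ψ` has nonvanishing derivative at every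
preimage of `p`. -/
theorem stmt_0 (Ψ f : ℂ → ℂ) (p lam : ℂ)
    (hΨdiff : Differentiable ℂ Ψ) (hfdiff : Differentiable ℂ f)
    (hΨnc : ∃ z w : ℂ, Ψ z ≠ Ψ w)
    (hlam : 1 < ‖lam‖)
    (hlin : ∀ z : ℂ, Ψ (lam * z) = f (Ψ z))
    (hΨ0 : Ψ 0 = p) (hfp : f p = p) (hd0 : deriv Ψ 0 ≠ 0)
    (hcrit : ∀ n : ℕ, 1 ≤ n → ∀ c : ℂ, deriv f c = 0 → f^[n] c ≠ p) :
    ∀ z : ℂ, Ψ z = p → deriv Ψ z ≠ 0 := by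
  intro z hz hdz
  have hlam0 : lam ≠ 0 := by
    intro h; rw [h] at hlam; simp at hlam; linarith
  have key : ∀ w : ℂ, deriv Ψ (lam * w) * lam = deriv f (Ψ w) * deriv Ψ w := by
    intro w
    have h1 : HasDerivAt (fun x => Ψ (lam * x)) (deriv Ψ (lam * w) * lam) w := by
      have := (hΨdiff (lam * w)).hasDerivAt
      have h' : HasDerivAt (fun x : ℂ => lam * x) lam w := by
        simpa using (hasDerivAt_id w).const_mul lam
      exact this.comp w h'
    have h2 : HasDerivAt (fun x => f (Ψ x)) (deriv f (Ψ w) * deriv Ψ w) w :=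
      (hfdiff (Ψ w)).hasDerivAt.comp w (hΨdiff w).hasDerivAt
    have h3 : HasDerivAt (fun x => Ψ (lam * x)) (deriv f (Ψ w) * deriv Ψ w) w := by
      simpa only [hlin] using h2
    exact h1.unique h3
  have main : ∀ n : ℕ, deriv Ψ (z / lam ^ n) = 0 ∧ f^[n] (Ψ (z / lam ^ n)) = p := by
    intro n
    induction n with
    | zero => simpa using ⟨hdz, hz⟩
    | succ n ih =>
      obtain ⟨ih1, ih2⟩ := ih
      have hmul : lam * (z / lam ^ (n + 1)) = z / lam ^ n := by
        field_simp; ring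
      have hk := key (z / lam ^ (n + 1))
      rw [hmul, ih1, zero_mul] at hk
      have horb : f^[n + 1] (Ψ (z / lam ^ (n + 1))) = p := by
        rw [Function.iterate_succ_apply, ← hlin, hmul, ih2]
      rcases mul_eq_zero.mp hk.symm with h | h
      · exact absurd horb (hcrit (n + 1) (by omega) _ h)
      · exact ⟨h, horb⟩
  have htend : Filter.Tendsto (fun n : ℕ => z / lam ^ n) Filter.atTop (nhds 0) := by
    have h1 : ‖(1 : ℂ) / lam‖ < 1 := by
      rw [norm_div, norm_one, div_lt_one (by positivity)]
      simpa using hlam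
    have h2 := tendsto_pow_atTop_nhds_zero_of_norm_lt_one h1
    have h3 := h2.const_mul z
    simpa [div_pow, div_eq_mul_inv, mul_comm] using h3
  have hcont : Continuous (deriv Ψ) :=
    (hΨdiff.contDiff (n := 2)).continuous_deriv one_le_two
  have h4 : Filter.Tendsto (fun n : ℕ => deriv Ψ (z / lam ^ n)) Filter.atTop
      (nhds (deriv Ψ 0)) := (hcont.tendsto 0).comp htend
  have h0 : Filter.Tendsto (fun _ : ℕ => (0 : ℂ)) Filter.atTop (nhds (deriv Ψ 0)) := by
    have heq : (fun n : ℕ => deriv Ψ (z / lam ^ n)) = fun _ : ℕ => (0 : ℂ) :=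
      funext fun n => (main n).1
    rwa [heq] at h4
  exact hd0 (tendsto_nhds_unique tendsto_const_nhds h0).symm
end

section
/- Let f : ℝ → ℝ be real-analytic near a critical point x₀ (f'(x₀) = 0, f not locally constant) with critical value c = f(x₀). Then for all sufficiently small ε > 0, at least one of the equations f(z) = c + ε or f(z) = c − ε has a non-real solution z in every complex neighborhood of x₀. -/
open Complex Filter Topology

lemma aux_exp_ne_one {t : ℝ} (ht : 0 < t) (h2 : t < 2 * Real.pi) :
    Complex.exp (↑t * Complex.I) ≠ 1 := by
  intro he
  rw [Complex.exp_eq_one_iff] at he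
  obtain ⟨n, hn⟩ := he
  have h' : (t : ℂ) * I = (↑((n : ℝ) * (2 * Real.pi)) : ℂ) * I := by rw [hn]; push_cast; ring
  have ht' : t = (n : ℝ) * (2 * Real.pi) := by
    have := mul_right_cancel₀ Complex.I_ne_zero h'
    exact_mod_cast this
  rcases lt_or_ge 0 n with h | h
  · have : (1 : ℝ) ≤ (n : ℝ) := by exact_mod_cast h
    nlinarith [Real.pi_pos]
  · have : (n : ℝ) ≤ 0 := by exact_mod_cast h
    nlinarith [Real.pi_pos]

lemma aux_dir (m : ℕ) (hm : 2 ≤ m) (b : ℂ) (hb : b ≠ 0) :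
    ∃ d : ℂ, (d ^ m = 1 ∨ d ^ m = -1) ∧ (d * (starRingEnd ℂ) b).im ≠ 0 := by
  have hmR : (0:ℝ) < (m : ℝ) := by positivity
  set θ := Real.pi / m with hθdef
  have hθpos : 0 < θ := div_pos Real.pi_pos hmR
  have hmθ : (m : ℝ) * θ = Real.pi := by rw [hθdef]; field_simp [hmR.ne']
  have hm2R : (2:ℝ) ≤ (m:ℝ) := by exact_mod_cast hm
  have hθle : θ ≤ Real.pi / 2 := by nlinarith
  set d1 := Complex.exp (↑θ * Complex.I) with hd1def
  have hd1ne : d1 ≠ 1 := aux_exp_ne_one hθpos (by nlinarith [Real.pi_pos])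
  have hd1sq : d1 ^ 2 ≠ 1 := by
    have : d1 ^ 2 = Complex.exp (↑(2 * θ) * Complex.I) := by
      rw [hd1def, ← Complex.exp_nat_mul]; push_cast; ring_nf
    rw [this]
    exact aux_exp_ne_one (by positivity) (by nlinarith [Real.pi_pos])
  have hd1m : d1 ^ m = -1 := by
    rw [hd1def, ← Complex.exp_nat_mul]
    have : ((m : ℕ) : ℂ) * (↑θ * Complex.I) = ↑Real.pi * Complex.I := by
      rw [show ((m : ℕ) : ℂ) * (↑θ * Complex.I) = ↑((m:ℝ) * θ) * Complex.I by push_cast; ring, hmθ]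
    rw [this, Complex.exp_pi_mul_I]
  have hd2m : (d1 ^ 2) ^ m = 1 := by
    rw [← pow_mul, mul_comm, pow_mul, hd1m]; norm_num
  by_contra h
  push_neg at h
  have h0 := h 1 (Or.inl (one_pow m))
  have h1 := h d1 (Or.inr hd1m)
  have h2 := h (d1 ^ 2) (Or.inl hd2m)
  have hcb : (starRingEnd ℂ) b ≠ 0 := by simpa using hb
  set A := ‖b‖ with hA
  have key : ∀ w : ℂ, ‖w‖ = 1 → (w * (starRingEnd ℂ) b).im = 0 →
      w * (starRingEnd ℂ) b = ↑A ∨ w * (starRingEnd ℂ) b = ↑(-A) := by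
    intro w hw him
    have he : w * (starRingEnd ℂ) b = ↑((w * (starRingEnd ℂ) b).re) :=
      Complex.ext rfl (by simp [him])
    have habs : |(w * (starRingEnd ℂ) b).re| = A := by
      have h' : ‖w * (starRingEnd ℂ) b‖ = A := by
        rw [norm_mul, hw, one_mul, Complex.norm_conj]
      rw [he, Complex.norm_real, Real.norm_eq_abs] at h'
      exact h'
    rcases (abs_eq (norm_nonneg b)).mp habs with h' | h'
    · left; rw [he, h']
    · right; rw [he, h']
  have k0 := key 1 norm_one h0
  have k1 := key d1 (by simp [hd1def, Complex.norm_exp_ofReal_mul_I θ]) h1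
  have k2 := key (d1 ^ 2) (by simp [hd1def, norm_pow, Complex.norm_exp_ofReal_mul_I θ]) h2
  have hne01 : (1 : ℂ) * (starRingEnd ℂ) b ≠ d1 * (starRingEnd ℂ) b :=
    fun hc => hd1ne ((mul_left_injective₀ hcb hc).symm)
  have hne02 : (1 : ℂ) * (starRingEnd ℂ) b ≠ d1 ^ 2 * (starRingEnd ℂ) b :=
    fun hc => hd1sq ((mul_left_injective₀ hcb hc).symm)
  have hne12 : d1 * (starRingEnd ℂ) b ≠ d1 ^ 2 * (starRingEnd ℂ) b := by
    intro hc
    have heq : d1 = d1 ^ 2 := mul_left_injective₀ hcb hc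
    have hd10 : d1 ≠ 0 := by rw [hd1def]; exact Complex.exp_ne_zero _
    have h' : d1 * 1 = d1 * d1 := by rw [mul_one]; nth_rewrite 1 [heq]; ring
    exact hd1ne (mul_left_cancel₀ hd10 h').symm
  rcases k0 with e0 | e0 <;> rcases k1 with e1 | e1 <;> rcases k2 with e2 | e2 <;> simp only [e0, e1, e2] at hne01 hne02 hne12 <;> simp_all
lemma aux_ofReal_mul_im (t : ℝ) (w : ℂ) : ((t : ℂ) * w).im = t * w.im := by
  rw [Complex.mul_im, Complex.ofReal_re, Complex.ofReal_im, zero_mul, add_zero]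

/-- Near a critical point `x₀` of a nonconstant real-analytic function `f` with critical
value `c`, for every neighborhood `U` of `x₀` and all sufficiently small `ε > 0`, at least
one of the equations `f(z) = c + ε`, `f(z) = c - ε` has a non-real solution in `U`. -/
theorem stmt_15 (f : ℂ → ℂ) (x₀ c : ℝ)
    (han : AnalyticAt ℂ f ((x₀ : ℝ) : ℂ))
    (hreal : ∀ᶠ x : ℝ in nhds x₀, (f ((x : ℝ) : ℂ)).im = 0)
    (hcrit : deriv f ((x₀ : ℝ) : ℂ) = 0)
    (hc : f ((x₀ : ℝ) : ℂ) = ((c : ℝ) : ℂ))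
    (hnc : ¬ ∀ᶠ z : ℂ in nhds ((x₀ : ℝ) : ℂ), f z = ((c : ℝ) : ℂ)) :
    ∀ U ∈ nhds ((x₀ : ℝ) : ℂ), ∀ᶠ ε : ℝ in nhdsWithin 0 (Set.Ioi 0),
      ∃ z ∈ U, z.im ≠ 0 ∧ (f z = (c : ℂ) + (ε : ℂ) ∨ f z = (c : ℂ) - (ε : ℂ)) := by
  set z₀ : ℂ := ((x₀ : ℝ) : ℂ) with hz₀
  -- Step 1: local normal form f z - c = (z - z₀)^m * g z
  have hFnz : ¬ ∀ᶠ z in 𝓝 z₀, f z - ↑c = 0 := fun h => hnc (h.mono fun z hz => sub_eq_zero.mp hz)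
  obtain ⟨m, g, hg, hg0, hfg⟩ :=
    ((han.sub analyticAt_const).exists_eventuallyEq_pow_smul_nonzero_iff).mpr hFnz
  simp only [Pi.sub_apply, smul_eq_mul] at hfg
  -- Step 2: m ≥ 2
  have hmne0 : m ≠ 0 := by
    rintro rfl
    have h := hfg.self_of_nhds
    rw [hc] at h
    simp at h
    exact hg0 h.symm
  have hmne1 : m ≠ 1 := by
    rintro rfl
    have h1 : HasDerivAt (fun z => (z - z₀) * g z) ((1:ℂ) * g z₀ + (z₀ - z₀) * deriv g z₀) z₀ :=
      ((hasDerivAt_id z₀).sub_const z₀).mul hg.differentiableAt.hasDerivAt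
    have hgd : HasDerivAt (fun z => ↑c + (z - z₀) ^ 1 * g z) (g z₀) z₀ := by
      simpa using h1.const_add (↑c : ℂ)
    have heq : f =ᶠ[𝓝 z₀] fun z => ↑c + (z - z₀) ^ 1 * g z :=
      hfg.mono fun z hz => by show f z = ↑c + (z - z₀) ^ 1 * g z; rw [← hz]; ring
    have : deriv f z₀ = g z₀ := by rw [heq.deriv_eq, hgd.deriv]
    exact hg0 (by rw [← this, hcrit])
  have hm : 2 ≤ m := by omega
  have hmC : (m : ℂ) ≠ 0 := by exact_mod_cast hmne0
  have hmR : (m : ℝ) ≠ 0 := by exact_mod_cast hmne0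
  -- Step 3: g is real on the real axis near x₀
  have hofR : Filter.Tendsto (fun x : ℝ => ((x : ℝ) : ℂ)) (𝓝 x₀) (𝓝 z₀) :=
    Complex.continuous_ofReal.continuousAt
  have hcont : Filter.Tendsto (fun x : ℝ => g ↑x) (𝓝 x₀) (𝓝 (g z₀)) :=
    hg.continuousAt.tendsto.comp hofR
  have e1' : ∀ᶠ x : ℝ in 𝓝 x₀, x ≠ x₀ → (g ↑x).im = 0 := by
    filter_upwards [hofR.eventually hfg, hreal] with x hx hxim hne
    have hcast : ((x : ℂ) - z₀) ^ m = ↑((x - x₀) ^ m) := by rw [hz₀]; push_cast; ring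
    rw [hcast] at hx
    have ht0 : (x - x₀) ^ m ≠ 0 := pow_ne_zero _ (sub_ne_zero.mpr hne)
    have him : (↑((x - x₀) ^ m) * g ↑x).im = 0 := by
      rw [← hx, Complex.sub_im, hxim, Complex.ofReal_im, sub_zero]
    rw [aux_ofReal_mul_im] at him
    exact (mul_eq_zero.mp him).resolve_left ht0
  have hg0im : (g z₀).im = 0 := by
    have hten : Filter.Tendsto (fun x : ℝ => (g ↑x).im) (𝓝[≠] x₀) (𝓝 (g z₀).im) :=
      ((Complex.continuous_im.tendsto (g z₀)).comp hcont).mono_left nhdsWithin_le_nhds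
    have hevA : ∀ᶠ x : ℝ in 𝓝[≠] x₀, x ≠ x₀ → (g ↑x).im = 0 := nhdsWithin_le_nhds e1'
    have hev : ∀ᶠ x : ℝ in 𝓝[≠] x₀, (g ↑x).im = 0 := by
      filter_upwards [hevA, self_mem_nhdsWithin] with x h hx
      exact h hx
    have h0 : Filter.Tendsto (fun _ : ℝ => (0:ℝ)) (𝓝[≠] x₀) (𝓝 (g z₀).im) :=
      Filter.Tendsto.congr' hev hten
    exact (tendsto_nhds_unique h0 tendsto_const_nhds)
  have e1 : ∀ᶠ x : ℝ in 𝓝 x₀, (g ↑x).im = 0 := by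
    filter_upwards [e1'] with x h
    by_cases hx : x = x₀
    · subst hx; exact hg0im
    · exact h hx
  have ha₀ : (g z₀).re ≠ 0 := fun h => hg0 (by apply Complex.ext <;> simp [h, hg0im])
  -- Step 4: m-th root b of g z₀, and analytic m-th root r of g
  set b : ℂ := Complex.exp (Complex.log (g z₀) / m) with hbdef
  have hb : b ≠ 0 := Complex.exp_ne_zero _
  have hbm : b ^ m = g z₀ := by
    rw [hbdef, ← Complex.exp_nat_mul, mul_div_cancel₀ _ hmC, Complex.exp_log hg0]
  set r : ℂ → ℂ := fun z => b * Complex.exp (Complex.log (g z / g z₀) / m) with hrdef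
  have hslit : g z₀ / g z₀ ∈ Complex.slitPlane := by
    rw [div_self hg0]; exact Complex.one_mem_slitPlane
  have hr : AnalyticAt ℂ r z₀ := by
    apply analyticAt_const.mul
    exact AnalyticAt.cexp (((hg.div analyticAt_const hg0).clog hslit).div analyticAt_const hmC)
  have hr0 : r z₀ = b := by
    rw [hrdef]; simp [div_self hg0, Complex.log_one]
  have hrm : ∀ᶠ z in 𝓝 z₀, r z ^ m = g z := by
    filter_upwards [hg.continuousAt.eventually_ne hg0] with z hz
    rw [hrdef]
    simp only
    rw [mul_pow, hbm, ← Complex.exp_nat_mul, mul_div_cancel₀ _ hmC,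
      Complex.exp_log (div_ne_zero hz hg0), mul_comm, div_mul_cancel₀ _ hg0]
  -- Step 5: φ z = (z - z₀) * r z, with φ^m = f - c, φ'(z₀) = b ≠ 0
  set φ : ℂ → ℂ := fun z => (z - z₀) * r z with hφdef
  have hφ0 : φ z₀ = 0 := by simp [hφdef]
  have hφan : AnalyticAt ℂ φ z₀ := (analyticAt_id.sub analyticAt_const).mul hr
  have hφd : HasDerivAt φ b z₀ := by
    have h := ((hasDerivAt_id z₀).sub_const z₀).mul hr.differentiableAt.hasDerivAt
    rw [show b = 1 * r z₀ + (id z₀ - z₀) * deriv r z₀ by simp [hr0]]; exact h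
  have hφs : HasStrictDerivAt φ b z₀ := by
    obtain ⟨p, hp⟩ := hφan
    have h := hp.hasStrictDerivAt
    rwa [h.hasDerivAt.unique hφd] at h
  have hfφ : ∀ᶠ z in 𝓝 z₀, f z = ↑c + φ z ^ m := by
    filter_upwards [hfg, hrm] with z h1 h2
    rw [hφdef]
    simp only
    rw [mul_pow, h2, ← h1]
    ring
  -- Step 6: local inverse ψ of φ
  set ψ : ℂ → ℂ := hφs.localInverse φ b z₀ hb with hψdef
  have hψ1 : ∀ᶠ w in 𝓝 (0 : ℂ), φ (ψ w) = w := by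
    have h := (hφs.hasStrictFDerivAt_equiv hb).eventually_right_inverse
    rwa [show φ z₀ = 0 from hφ0] at h
  have hψt : Filter.Tendsto ψ (𝓝 (0 : ℂ)) (𝓝 z₀) := by
    have h := (hφs.hasStrictFDerivAt_equiv hb).localInverse_tendsto
    rwa [show φ z₀ = 0 from hφ0] at h
  -- Step 7: on the real axis, φ lands in the line ℝ·b
  have hline : ∀ᶠ x : ℝ in 𝓝 x₀, (φ ↑x * (starRingEnd ℂ) b).im = 0 := by
    have htre : Filter.Tendsto (fun x : ℝ => (g ↑x).re / (g z₀).re) (𝓝 x₀) (𝓝 1) := by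
      have h1 : Filter.Tendsto (fun x : ℝ => (g ↑x).re) (𝓝 x₀) (𝓝 (g z₀).re) :=
        (Complex.continuous_re.tendsto (g z₀)).comp hcont
      have h2 := h1.div_const ((g z₀).re)
      rwa [div_self ha₀] at h2
    have hpos : ∀ᶠ x : ℝ in 𝓝 x₀, 0 < (g ↑x).re / (g z₀).re :=
      htre.eventually (eventually_gt_nhds one_pos)
    filter_upwards [e1, hpos] with x him hρ
    set ρ : ℝ := (g ↑x).re / (g z₀).re with hρdef
    have hgx : g ↑x = ↑((g ↑x).re) := Complex.ext rfl (by simp [him])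
    have hdiv : g ↑x / g z₀ = ↑ρ := by
      rw [hgx, show g z₀ = ↑((g z₀).re) from Complex.ext rfl (by simp [hg0im]),
        ← Complex.ofReal_div]
    have hrx : r ↑x = ↑(Real.exp (Real.log ρ / m)) * b := by
      rw [hrdef]
      simp only
      rw [hdiv, ← Complex.ofReal_log hρ.le,
        show ((Real.log ρ : ℝ) : ℂ) / (m : ℂ) = ↑(Real.log ρ / (m : ℝ)) by push_cast; ring,
        ← Complex.ofReal_exp]
      ring
    have hφx : φ ↑x = ↑((x - x₀) * Real.exp (Real.log ρ / m)) * b := by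
      rw [hφdef]
      simp only
      rw [hrx, hz₀]
      push_cast
      ring
    rw [hφx, mul_assoc, Complex.mul_conj, ← Complex.ofReal_mul, Complex.ofReal_im]
  -- Step 8: choose a direction d with d^m = ±1 not aligned with the line ℝ·b
  obtain ⟨d, hdm, hdim⟩ := aux_dir m hm b hb
  -- Main argument
  intro U hU
  obtain ⟨δ, hδpos, hδ⟩ := Metric.eventually_nhds_iff.mp hline
  have hUev : ∀ᶠ z in 𝓝 z₀, z ∈ U := hU
  have hball : ∀ᶠ z : ℂ in 𝓝 z₀, dist z z₀ < δ :=
    Metric.eventually_nhds_iff.mpr ⟨δ, hδpos, fun _ hy => hy⟩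
  have hVev : ∀ᶠ z in 𝓝 z₀, f z = ↑c + φ z ^ m ∧ z ∈ U ∧ dist z z₀ < δ :=
    hfφ.and (hUev.and hball)
  have ht1 : Filter.Tendsto (fun ε : ℝ => ε ^ (1 / (m : ℝ))) (𝓝[>] (0:ℝ)) (𝓝 0) := by
    have hca : ContinuousAt (fun x : ℝ => x ^ (1 / (m : ℝ))) 0 :=
      Real.continuousAt_rpow_const 0 _ (Or.inr (by positivity))
    have h : Filter.Tendsto (fun x : ℝ => x ^ (1 / (m : ℝ))) (𝓝[>] (0:ℝ))
        (𝓝 ((0:ℝ) ^ (1 / (m : ℝ)))) := hca.tendsto.mono_left nhdsWithin_le_nhds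
    rwa [Real.zero_rpow (by positivity : 1 / (m:ℝ) ≠ 0)] at h
  have htw : Filter.Tendsto (fun ε : ℝ => (↑(ε ^ (1 / (m : ℝ))) : ℂ) * d) (𝓝[>] (0:ℝ)) (𝓝 0) := by
    have h := (Complex.continuous_ofReal.continuousAt.tendsto.comp ht1).mul_const d
    simpa using h
  have htψ : Filter.Tendsto (fun ε : ℝ => ψ ((↑(ε ^ (1 / (m : ℝ))) : ℂ) * d)) (𝓝[>] (0:ℝ)) (𝓝 z₀) :=
    hψt.comp htw
  filter_upwards [self_mem_nhdsWithin, htw.eventually hψ1, htψ.eventually hVev] with ε hε hinv hV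
  have hε' : (0:ℝ) < ε := hε
  set ρ : ℝ := ε ^ (1 / (m : ℝ)) with hρ
  have hρpos : 0 < ρ := Real.rpow_pos_of_pos hε' _
  set w : ℂ := (↑ρ : ℂ) * d with hw
  obtain ⟨hfz, hzU, hzd⟩ := hV
  have hφz : φ (ψ w) = w := hinv
  have hwm : w ^ m = ↑ε * d ^ m := by
    rw [hw, mul_pow, ← Complex.ofReal_pow]
    congr 2
    rw [hρ, ← Real.rpow_natCast (ε ^ (1 / (m:ℝ))) m, ← Real.rpow_mul hε'.le,
      one_div, inv_mul_cancel₀ hmR, Real.rpow_one]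
  refine ⟨ψ w, hzU, ?_, ?_⟩
  · intro h0
    have hzr : ψ w = ↑((ψ w).re) := Complex.ext rfl (by simp [h0])
    have hdist : dist (ψ w).re x₀ < δ := by
      rw [hzr, hz₀] at hzd
      rwa [Complex.isometry_ofReal.dist_eq] at hzd
    have hl := hδ hdist
    rw [← hzr, hφz, hw, mul_assoc] at hl
    have hl' : ρ * (d * (starRingEnd ℂ) b).im = 0 := by
      simpa [Complex.mul_im] using hl
    exact hdim ((mul_eq_zero.mp hl').resolve_left (ne_of_gt hρpos))
  · rcases hdm with h | h
    · left; rw [hfz, hφz, hwm, h, mul_one]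
    · right; rw [hfz, hφz, hwm, h]; ring
end
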